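/- For every δ ≥ 0 the limit H_Z^δ = lim_{T→∞} T^{-d} E[ sup_{t ∈ [0,T]^d ∩ δℤ^d} Z(t) ] (with the convention 0·ℤ^d := ℝ^d) exists and is a finite nonnegative real number. -/

import Mathlib

open MeasureTheory ENNReal Filter Set Topology

/-- The grid `δ ℤ^d ⊆ ℝ^d`, with the convention `0 ℤ^d = ℝ^d`. -/
noncomputable def pickandsGrid (d : ℕ) (δ : ℝ) : Set (Fin d → ℝ) :=
  if δ = 0 then Set.univ else {t | ∀ i, ∃ k : ℤ, t i = δ * k}

/-- The cube `[0,T]^d`. -/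
noncomputable def pickandsCube (d : ℕ) (T : ℝ) : Set (Fin d → ℝ) :=
  Set.Icc 0 (fun _ => T)

/-- `E[ sup_{t ∈ S} Z(t) ]`, as a Lebesgue integral of the (extended-real valued)
supremum of the nonnegative field `Z` over `S`. -/
noncomputable def esupField {Ω : Type*} [MeasurableSpace Ω] (P : Measure Ω) {d : ℕ}
    (Z : (Fin d → ℝ) → Ω → ℝ) (S : Set (Fin d → ℝ)) : ℝ≥0∞ :=
  ∫⁻ ω, ⨆ t ∈ S, ENNReal.ofReal (Z t ω) ∂P

private lemma le_liminf_aux (H : ℝ≥0∞) (g : ℝ → ℝ≥0∞) (d : ℕ)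
    (h : ∀ ε : ℝ, 0 < ε → ε < 1 → ∀ᶠ T in atTop, H * ENNReal.ofReal ((1-ε)^d) ≤ g T) :
    H ≤ liminf g atTop := by
  have h2 : ∀ ε ∈ Ioo (0:ℝ) 1, H * ENNReal.ofReal ((1-ε)^d) ≤ liminf g atTop :=
    fun ε hε => le_liminf_of_le (by isBoundedDefault) (h ε hε.1 hε.2)
  have ht : Tendsto (fun ε : ℝ => H * ENNReal.ofReal ((1-ε)^d)) (𝓝[>] (0:ℝ)) (𝓝 H) := by
    have hin : Tendsto (fun ε : ℝ => ENNReal.ofReal ((1-ε)^d)) (𝓝[>] (0:ℝ))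
        (𝓝 (ENNReal.ofReal ((1-0)^d))) :=
      ((ENNReal.continuous_ofReal.tendsto _).comp
        (((continuous_const.sub continuous_id).pow d).tendsto 0)).mono_left nhdsWithin_le_nhds
    have := ENNReal.Tendsto.const_mul (a := H) hin (Or.inl (by simp))
    simpa using this
  refine le_of_tendsto ht ?_
  filter_upwards [Ioo_mem_nhdsGT_of_mem (by constructor <;> norm_num : (0:ℝ) ∈ Ico (0:ℝ) 1)]
    with ε hε using h2 ε hε

private lemma limsup_le_aux (g : ℝ → ℝ≥0∞) (B : ℝ≥0∞) (d : ℕ)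
    (h : ∀ ε : ℝ, 0 < ε → ∀ᶠ T in atTop, g T ≤ B * ENNReal.ofReal ((1+ε)^d)) :
    limsup g atTop ≤ B := by
  have h2 : ∀ ε : ℝ, 0 < ε → limsup g atTop ≤ B * ENNReal.ofReal ((1+ε)^d) :=
    fun ε hε => limsup_le_of_le (by isBoundedDefault) (h ε hε)
  have ht : Tendsto (fun ε : ℝ => B * ENNReal.ofReal ((1+ε)^d)) (𝓝[>] (0:ℝ)) (𝓝 B) := by
    have hin : Tendsto (fun ε : ℝ => ENNReal.ofReal ((1+ε)^d)) (𝓝[>] (0:ℝ))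
        (𝓝 (ENNReal.ofReal ((1+0)^d))) :=
      ((ENNReal.continuous_ofReal.tendsto _).comp
        (((continuous_const.add continuous_id).pow d).tendsto 0)).mono_left nhdsWithin_le_nhds
    have := ENNReal.Tendsto.const_mul (a := B) hin (Or.inl (by simp))
    simpa using this
  refine ge_of_tendsto ht ?_
  filter_upwards [self_mem_nhdsWithin] with ε hε using h2 ε hε

private lemma limsup_div_le (f : ℝ → ℝ≥0∞) (d : ℕ) (s : ℝ) (hs : 0 < s) (C : ℝ≥0∞)
    (h : ∀ T : ℝ, 0 < T → f T ≤ (⌈T/s⌉₊ : ℝ≥0∞)^d * C) :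
    limsup (fun T => f T / ENNReal.ofReal (T^d)) atTop ≤ C / ENNReal.ofReal (s^d) := by
  apply limsup_le_aux _ _ d
  intro ε hε
  filter_upwards [eventually_ge_atTop (max 1 (s/ε))] with T hT
  have hT1 : (1:ℝ) ≤ T := le_trans (le_max_left _ _) hT
  have hTpos : (0:ℝ) < T := lt_of_lt_of_le one_pos hT1
  have hsε : s/ε ≤ T := le_trans (le_max_right _ _) hT
  have hεT : s ≤ ε * T := by
    rw [div_le_iff₀ hε] at hsε; linarith [hsε]
  have hN : (⌈T/s⌉₊ : ℝ) ≤ (1+ε) * T / s := by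
    have h1 : (⌈T/s⌉₊ : ℝ) < T/s + 1 := Nat.ceil_lt_add_one (by positivity)
    have h2 : (1:ℝ) ≤ ε * T / s := by rw [le_div_iff₀ hs]; linarith
    have : (1+ε) * T / s = T/s + ε*T/s := by ring
    rw [this]; linarith
  have hNd : ((⌈T/s⌉₊ : ℝ≥0∞))^d ≤ ENNReal.ofReal (((1+ε) * T / s)^d) := by
    rw [show ((⌈T/s⌉₊ : ℝ≥0∞)) = ENNReal.ofReal ((⌈T/s⌉₊ : ℝ)) by simp,
      ← ENNReal.ofReal_pow (by positivity)]
    exact ENNReal.ofReal_le_ofReal (pow_le_pow_left₀ (by positivity) hN d)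
  have key : f T ≤ ENNReal.ofReal (((1+ε) * T / s)^d) * C :=
    le_trans (h T hTpos) (by gcongr)
  have hsplit : (((1+ε) * T / s : ℝ))^d = ((1+ε)^d / s^d) * T^d := by
    rw [div_pow, mul_pow]; ring
  have hTd0 : ENNReal.ofReal (T^d) ≠ 0 := (ENNReal.ofReal_pos.2 (by positivity)).ne'
  have hTdt : ENNReal.ofReal (T^d) ≠ ⊤ := ENNReal.ofReal_ne_top
  calc f T / ENNReal.ofReal (T^d)
      ≤ (ENNReal.ofReal (((1+ε) * T / s)^d) * C) / ENNReal.ofReal (T^d) :=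
        ENNReal.div_le_div_right key _
    _ = (ENNReal.ofReal ((1+ε)^d / s^d) * ENNReal.ofReal (T^d) * C) / ENNReal.ofReal (T^d) := by
        rw [hsplit, ENNReal.ofReal_mul (by positivity)]
    _ = ENNReal.ofReal ((1+ε)^d / s^d) * C := by
        rw [mul_comm (ENNReal.ofReal ((1+ε)^d / s^d)) (ENNReal.ofReal (T^d)), mul_assoc,
          mul_div_assoc, ENNReal.mul_div_cancel' (fun h => absurd h hTd0) (fun h => absurd h hTdt)]
    _ ≤ (C / ENNReal.ofReal (s^d)) * ENNReal.ofReal ((1+ε)^d) := by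
        rw [ENNReal.ofReal_div_of_pos (by positivity), div_eq_mul_inv, div_eq_mul_inv]
        exact le_of_eq (by ring)

private lemma cover_coord {T s x : ℝ} (hs : 0 < s) (hT : 0 < T) (hx0 : 0 ≤ x) (hxT : x ≤ T) :
    ∃ q : ℕ, q < ⌈T/s⌉₊ ∧ (q:ℝ) * s ≤ x ∧ x ≤ (q:ℝ) * s + s := by
  set N := ⌈T/s⌉₊ with hN
  have hN1 : 1 ≤ N := Nat.one_le_ceil_iff.2 (by positivity)
  have hTN : T ≤ (N:ℝ) * s := by
    have h1 : T/s ≤ (N:ℝ) := Nat.le_ceil (T/s)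
    rw [div_le_iff₀ hs] at h1
    linarith [h1]
  by_cases hq : ⌊x/s⌋₊ < N
  · refine ⟨⌊x/s⌋₊, hq, ?_, ?_⟩
    · rw [← le_div_iff₀ hs]; exact Nat.floor_le (by positivity)
    · have := Nat.lt_floor_add_one (x/s)
      rw [div_lt_iff₀ hs] at this
      linarith [this]
  · push_neg at hq
    have hxN : (N:ℝ) * s ≤ x := by
      have h3 : (N:ℝ) ≤ x/s := by exact_mod_cast (Nat.le_floor_iff (by positivity)).1 hq
      rw [le_div_iff₀ hs] at h3; linarith [h3]
    have hcast : ((N - 1 : ℕ):ℝ) = (N:ℝ) - 1 := by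
      have h4 : (1:ℕ) ≤ N := hN1
      push_cast [h4]; ring
    have hx2 : x ≤ (N:ℝ) * s := le_trans hxT hTN
    exact ⟨N - 1, by omega, by rw [hcast]; nlinarith [hxN, hs], by rw [hcast]; nlinarith [hx2]⟩

private lemma cover_cube {d : ℕ} {T s : ℝ} (hs : 0 < s) (hT : 0 < T)
    {x : Fin d → ℝ} (hx : x ∈ pickandsCube d T) :
    ∃ j ∈ Fintype.piFinset (fun _ : Fin d => Finset.range ⌈T/s⌉₊),
      ∀ i, (j i : ℝ) * s ≤ x i ∧ x i ≤ (j i : ℝ) * s + s := by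
  obtain ⟨hx0, hxT⟩ := hx
  have h : ∀ i, ∃ q : ℕ, q < ⌈T/s⌉₊ ∧ (q:ℝ) * s ≤ x i ∧ x i ≤ (q:ℝ) * s + s :=
    fun i => cover_coord hs hT (hx0 i) (hxT i)
  choose j hj1 hj2 hj3 using h
  exact ⟨j, Fintype.mem_piFinset.2 fun i => Finset.mem_range.2 (hj1 i),
    fun i => ⟨hj2 i, hj3 i⟩⟩

private lemma biSup_le_sum {α ι : Type*} (g : α → ℝ≥0∞) (S : Set α) (J : Finset ι)
    (U : ι → Set α) (hcov : S ⊆ ⋃ j ∈ J, U j) :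
    (⨆ t ∈ S, g t) ≤ ∑ j ∈ J, ⨆ t ∈ U j, g t := by
  refine iSup₂_le fun t ht => ?_
  obtain ⟨j, hj, htj⟩ := by simpa using hcov ht
  exact le_trans (le_biSup _ htj)
    (Finset.single_le_sum (f := fun j => ⨆ t ∈ U j, g t) (fun _ _ => zero_le) hj)

private lemma biSup_mono_set {α : Type*} (g : α → ℝ≥0∞) {S S' : Set α} (h : S ⊆ S') :
    (⨆ t ∈ S, g t) ≤ ⨆ t ∈ S', g t :=
  biSup_mono h

section grid
variable {d : ℕ} {δ : ℝ}

private lemma grid_mem (hδ : δ ≠ 0) {t : Fin d → ℝ} :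
    t ∈ pickandsGrid d δ ↔ ∀ i, ∃ k : ℤ, t i = δ * k := by
  unfold pickandsGrid; rw [if_neg hδ]; rfl

private lemma grid_countable (hδ : δ ≠ 0) : (pickandsGrid d δ).Countable := by
  have : pickandsGrid d δ ⊆ Set.range (fun k : Fin d → ℤ => fun i => δ * (k i : ℝ)) := by
    intro t ht
    rw [grid_mem hδ] at ht
    choose k hk using ht
    exact ⟨k, by funext i; exact (hk i).symm⟩
  exact Set.Countable.mono this (Set.countable_range _)

private lemma cube_grid_finite (hδ : 0 < δ) (s : ℝ) :
    (pickandsCube d s ∩ pickandsGrid d δ).Finite := by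
  apply Set.Finite.subset (Set.Finite.image (f := fun k : Fin d → ℤ => fun i => δ * (k i : ℝ))
    ((Set.Finite.pi (fun _ : Fin d => Set.finite_Icc (0:ℤ) ⌈s/δ⌉))))
  rintro t ⟨⟨ht0, hts⟩, htg⟩
  rw [grid_mem hδ.ne'] at htg
  choose k hk using htg
  refine ⟨k, ?_, by funext i; exact (hk i).symm⟩
  rw [Set.mem_pi]
  intro i _
  rw [Set.mem_Icc]
  have h0 : (0:ℝ) ≤ δ * k i := by rw [← hk i]; exact ht0 i
  have h1 : δ * (k i : ℝ) ≤ s := by rw [← hk i]; exact hts i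
  constructor
  · by_contra hneg
    push_neg at hneg
    have : (k i : ℝ) < 0 := by exact_mod_cast hneg
    nlinarith
  · have : (k i : ℝ) ≤ s/δ := by rw [le_div_iff₀ hδ]; linarith [h1]
    exact_mod_cast le_trans this (Int.le_ceil _)

private lemma cube_grid_compact (hδ : 0 < δ) (s : ℝ) :
    IsCompact (pickandsCube d s ∩ pickandsGrid d δ) :=
  (cube_grid_finite hδ s).isCompact

private lemma cube_grid_trunc (hδ : 0 < δ) {T : ℝ} (hT : 0 ≤ T) :
    pickandsCube d T ∩ pickandsGrid d δ
      = pickandsCube d (δ * ⌊T/δ⌋₊) ∩ pickandsGrid d δ := by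
  apply Set.Subset.antisymm
  · rintro t ⟨⟨ht0, htT⟩, htg⟩
    refine ⟨⟨ht0, fun i => ?_⟩, htg⟩
    obtain ⟨k, hk⟩ := (grid_mem hδ.ne').1 htg i
    have hk0 : (0:ℝ) ≤ δ * k := by rw [← hk]; exact ht0 i
    have hkk : (0:ℤ) ≤ k := by
      by_contra hneg
      push_neg at hneg
      have : (k:ℝ) < 0 := by exact_mod_cast hneg
      nlinarith
    have hkT : (k:ℝ) ≤ T/δ := by
      rw [le_div_iff₀ hδ]
      have := htT i; rw [hk] at this; linarith
    have heq : ((k.toNat : ℕ) : ℝ) = (k:ℝ) := by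
      exact_mod_cast congrArg (Int.cast : ℤ → ℝ) (Int.toNat_of_nonneg hkk)
    have hfl : k.toNat ≤ ⌊T/δ⌋₊ := Nat.le_floor (by rw [heq]; exact hkT)
    have hkr : (k:ℝ) ≤ (⌊T/δ⌋₊ : ℝ) := by
      rw [← heq]; exact_mod_cast hfl
    show t i ≤ δ * ⌊T/δ⌋₊
    rw [hk]
    exact mul_le_mul_of_nonneg_left hkr hδ.le
  · rintro t ⟨⟨ht0, htT⟩, htg⟩
    refine ⟨⟨ht0, fun i => le_trans (htT i) ?_⟩, htg⟩
    have h1 : (⌊T/δ⌋₊:ℝ) ≤ T/δ := Nat.floor_le (by positivity)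
    rw [← le_div_iff₀' hδ]
    exact h1

private lemma grid_shift_mem (hδ : δ ≠ 0) {t c : Fin d → ℝ}
    (ht : t ∈ pickandsGrid d δ) (hc : ∀ i, ∃ k : ℤ, c i = δ * k) :
    t + c ∈ pickandsGrid d δ := by
  rw [grid_mem hδ] at ht ⊢
  intro i
  obtain ⟨k₁, hk₁⟩ := ht i
  obtain ⟨k₂, hk₂⟩ := hc i
  exact ⟨k₁ + k₂, by push_cast; simp [hk₁, hk₂]; ring⟩

end grid

section meas
variable {Ω : Type*} [MeasurableSpace Ω] (P : Measure Ω) {d : ℕ} (Z : (Fin d → ℝ) → Ω → ℝ)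

private lemma meas_biSup (hjm : Measurable (Function.uncurry Z)) {S : Set (Fin d → ℝ)}
    (hS : S.Countable) : Measurable fun ω => ⨆ t ∈ S, ENNReal.ofReal (Z t ω) :=
  Measurable.biSup S hS fun t _ =>
    ENNReal.measurable_ofReal.comp (hjm.comp measurable_prodMk_left)

private lemma esup_mono {S S' : Set (Fin d → ℝ)} (h : S ⊆ S') :
    esupField P Z S ≤ esupField P Z S' :=
  lintegral_mono fun ω => biSup_mono_set _ h

private lemma esup_shift
    (hshi : ∀ K : Set (Fin d → ℝ), IsCompact K → ∀ c : Fin d → ℝ,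
      esupField P (fun t ω => Z (t + c) ω) K = esupField P Z K)
    {K : Set (Fin d → ℝ)} (hK : IsCompact K) (c : Fin d → ℝ) :
    esupField P Z ((fun t => t + c) '' K) = esupField P Z K := by
  rw [← hshi K hK c]
  unfold esupField
  congr 1
  ext ω
  exact iSup_image

private lemma sum_card_pow {d N : ℕ} (a : ℝ≥0∞) :
    ∑ _j ∈ Fintype.piFinset (fun _ : Fin d => Finset.range N), a = ((N : ℝ≥0∞))^d * a := by
  rw [Finset.sum_const, Fintype.card_piFinset]
  simp only [Finset.card_range, Finset.prod_const, Finset.card_univ, Fintype.card_fin,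
    nsmul_eq_mul, Nat.cast_pow]

private lemma subadd_pos (hjm : Measurable (Function.uncurry Z))
    (hshi : ∀ K : Set (Fin d → ℝ), IsCompact K → ∀ c : Fin d → ℝ,
      esupField P (fun t ω => Z (t + c) ω) K = esupField P Z K)
    {δ : ℝ} (hδ : 0 < δ) {m : ℕ} (hm : 0 < m) {T : ℝ} (hT : 0 < T) :
    esupField P Z (pickandsCube d T ∩ pickandsGrid d δ)
      ≤ ((⌈T/(δ*m)⌉₊ : ℝ≥0∞))^d
          * esupField P Z (pickandsCube d (δ*m) ∩ pickandsGrid d δ) := by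
  set s : ℝ := δ * m with hsdef
  have hs : 0 < s := by positivity
  set N := ⌈T/s⌉₊ with hNdef
  set J := Fintype.piFinset (fun _ : Fin d => Finset.range N) with hJdef
  set c : (Fin d → ℕ) → (Fin d → ℝ) := fun j i => (j i : ℝ) * s with hcdef
  set K := pickandsCube d s ∩ pickandsGrid d δ with hKdef
  have hKfin : K.Finite := cube_grid_finite hδ s
  have hKcnt : K.Countable := hKfin.countable
  have hKcpt : IsCompact K := cube_grid_compact hδ s
  have hcov : pickandsCube d T ∩ pickandsGrid d δ ⊆ ⋃ j ∈ J, (fun t => t + c j) '' K := by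
    rintro t ⟨htc, htg⟩
    obtain ⟨j, hjJ, hj⟩ := cover_cube hs hT htc
    refine Set.mem_biUnion hjJ ⟨t - c j, ⟨⟨?_, ?_⟩, ?_⟩, by simp⟩
    · intro i
      simp only [Pi.zero_apply, Pi.sub_apply, hcdef, sub_nonneg]
      exact (hj i).1
    · intro i
      simp only [Pi.sub_apply, hcdef]
      have := (hj i).2
      simp only [sub_le_iff_le_add]
      linarith [this]
    · rw [grid_mem hδ.ne'] at htg ⊢
      intro i
      obtain ⟨k, hk⟩ := htg i
      refine ⟨k - (j i : ℤ) * m, ?_⟩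
      simp only [Pi.sub_apply, hcdef, hk, hsdef]
      push_cast
      ring
  calc esupField P Z (pickandsCube d T ∩ pickandsGrid d δ)
      ≤ ∫⁻ ω, ∑ j ∈ J, ⨆ t ∈ (fun t => t + c j) '' K, ENNReal.ofReal (Z t ω) ∂P :=
        lintegral_mono fun ω => biSup_le_sum _ _ J _ hcov
    _ = ∑ j ∈ J, esupField P Z ((fun t => t + c j) '' K) :=
        lintegral_finset_sum J fun j _ => meas_biSup Z hjm (hKcnt.image _)
    _ = ∑ _j ∈ J, esupField P Z K :=
        Finset.sum_congr rfl fun j _ => esup_shift P Z hshi hKcpt (c j)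
    _ = ((N : ℝ≥0∞))^d * esupField P Z K := sum_card_pow _

private lemma subadd_zero [IsProbabilityMeasure P] (hjm : Measurable (Function.uncurry Z))
    (hshi : ∀ K : Set (Fin d → ℝ), IsCompact K → ∀ c : Fin d → ℝ,
      esupField P (fun t ω => Z (t + c) ω) K = esupField P Z K)
    (D₀ : Set (Fin d → ℝ)) (hD₀ : D₀.Countable)
    (hae : ∀ᵐ ω ∂P, ∀ U : Set (Fin d → ℝ), IsOpen U →
      (⨆ t ∈ U ∩ D₀, ENNReal.ofReal (Z t ω)) = ⨆ t ∈ U, ENNReal.ofReal (Z t ω))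
    {s ε T : ℝ} (hs : 0 < s) (hε : 0 < ε) (hT : 0 < T) :
    esupField P Z (pickandsCube d T)
      ≤ ((⌈T/s⌉₊ : ℝ≥0∞))^d * esupField P Z (pickandsCube d (s + 2*ε)) := by
  set N := ⌈T/s⌉₊ with hNdef
  set J := Fintype.piFinset (fun _ : Fin d => Finset.range N) with hJdef
  set c : (Fin d → ℕ) → (Fin d → ℝ) := fun j i => (j i : ℝ) * s with hcdef
  set U : (Fin d → ℕ) → Set (Fin d → ℝ) :=
    fun j => Set.pi Set.univ (fun i => Set.Ioo (c j i - ε) (c j i + s + ε)) with hUdef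
  have hUopen : ∀ j, IsOpen (U j) :=
    fun j => isOpen_set_pi Set.finite_univ (fun i _ => isOpen_Ioo)
  have hcov : pickandsCube d T ⊆ ⋃ j ∈ J, U j := by
    intro x hx
    obtain ⟨j, hjJ, hj⟩ := cover_cube hs hT hx
    refine Set.mem_biUnion hjJ ?_
    rw [Set.mem_univ_pi]
    intro i
    have hc' : c j i = (j i : ℝ) * s := rfl
    exact ⟨by rw [hc']; linarith [(hj i).1], by rw [hc']; linarith [(hj i).2]⟩
  have step1 : esupField P Z (pickandsCube d T)
      ≤ ∫⁻ ω, ∑ j ∈ J, ⨆ t ∈ U j ∩ D₀, ENNReal.ofReal (Z t ω) ∂P := by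
    apply lintegral_mono_ae
    filter_upwards [hae] with ω hω
    calc (⨆ t ∈ pickandsCube d T, ENNReal.ofReal (Z t ω))
        ≤ ∑ j ∈ J, ⨆ t ∈ U j, ENNReal.ofReal (Z t ω) := biSup_le_sum _ _ J _ hcov
      _ = ∑ j ∈ J, ⨆ t ∈ U j ∩ D₀, ENNReal.ofReal (Z t ω) :=
          Finset.sum_congr rfl fun j _ => (hω (U j) (hUopen j)).symm
  have step2 : (∫⁻ ω, ∑ j ∈ J, ⨆ t ∈ U j ∩ D₀, ENNReal.ofReal (Z t ω) ∂P)
      = ∑ j ∈ J, ∫⁻ ω, ⨆ t ∈ U j ∩ D₀, ENNReal.ofReal (Z t ω) ∂P :=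
    lintegral_finset_sum J fun j _ =>
      meas_biSup Z hjm (hD₀.mono Set.inter_subset_right)
  have step3 : ∀ j, (∫⁻ ω, ⨆ t ∈ U j ∩ D₀, ENNReal.ofReal (Z t ω) ∂P)
      ≤ esupField P Z (pickandsCube d (s + 2*ε)) := by
    intro j
    have hsub : U j ∩ D₀ ⊆ (fun t => t + (fun i => c j i - ε)) '' pickandsCube d (s + 2*ε) := by
      intro x hx
      have hx1 := hx.1
      rw [Set.mem_univ_pi] at hx1
      rw [show pickandsCube d (s + 2*ε) = Set.Icc 0 (fun _ => s + 2*ε) from rfl,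
        Set.image_add_const_Icc]
      constructor
      · intro i
        simp only [Pi.add_apply, Pi.zero_apply]
        have := (hx1 i).1
        simp only [Set.mem_Ioo] at *
        linarith [(hx1 i).1.le]
      · intro i
        simp only [Pi.add_apply]
        linarith [(hx1 i).2.le]
    calc (∫⁻ ω, ⨆ t ∈ U j ∩ D₀, ENNReal.ofReal (Z t ω) ∂P)
        ≤ esupField P Z ((fun t => t + (fun i => c j i - ε)) '' pickandsCube d (s + 2*ε)) :=
          lintegral_mono fun ω => biSup_mono_set _ hsub
      _ = esupField P Z (pickandsCube d (s + 2*ε)) :=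
          esup_shift P Z hshi isCompact_Icc _
  calc esupField P Z (pickandsCube d T)
      ≤ ∑ j ∈ J, ∫⁻ ω, ⨆ t ∈ U j ∩ D₀, ENNReal.ofReal (Z t ω) ∂P := step1.trans step2.le
    _ ≤ ∑ _j ∈ J, esupField P Z (pickandsCube d (s + 2*ε)) :=
        Finset.sum_le_sum fun j _ => step3 j
    _ = ((N : ℝ≥0∞))^d * esupField P Z (pickandsCube d (s + 2*ε)) := sum_card_pow _

end meas


/-- under the standing assumptions, for every `δ ≥ 0` the limit
`H_Z^δ = lim_{T→∞} T^{-d} E[ sup_{t ∈ [0,T]^d ∩ δℤ^d} Z(t) ]` exists and is a finite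
nonnegative number. -/
theorem pickands_constant_exists
    {Ω : Type*} [MeasurableSpace Ω] (P : Measure Ω) [IsProbabilityMeasure P]
    (d : ℕ) (hd : 0 < d) (Z : (Fin d → ℝ) → Ω → ℝ)
    (hjm : Measurable (Function.uncurry Z))
    (hnn : ∀ t ω, 0 ≤ Z t ω)
    (hsep : ∃ D₀ : Set (Fin d → ℝ), D₀.Countable ∧ Dense D₀ ∧
      ∀ᵐ ω ∂P, ∀ U : Set (Fin d → ℝ), IsOpen U →
        (⨆ t ∈ U ∩ D₀, ENNReal.ofReal (Z t ω)) = ⨆ t ∈ U, ENNReal.ofReal (Z t ω))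
    (hsc : ∀ t : Fin d → ℝ, ∀ ε > (0 : ℝ),
      Tendsto (fun s => P {ω | ε ≤ |Z s ω - Z t ω|}) (𝓝 t) (𝓝 0))
    (hMS : ∀ t : Fin d → ℝ, ∫⁻ ω, ENNReal.ofReal (Z t ω) ∂P = 1)
    (hnorm : ∀ T > (0 : ℝ),
      0 < esupField P Z (pickandsCube d T) ∧ esupField P Z (pickandsCube d T) < ⊤)
    (hshi : ∀ K : Set (Fin d → ℝ), IsCompact K → ∀ c : Fin d → ℝ,
      esupField P (fun t ω => Z (t + c) ω) K = esupField P Z K) :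
    ∀ δ ≥ (0 : ℝ), ∃ H : ℝ≥0∞, H ≠ ⊤ ∧
      Tendsto (fun T : ℝ =>
          esupField P Z (pickandsCube d T ∩ pickandsGrid d δ) / ENNReal.ofReal (T ^ d))
        atTop (𝓝 H) := by
  obtain ⟨D₀, hD₀c, -, hae⟩ := hsep
  intro δ hδ0
  have hfin : ∀ s : ℝ, 0 < s → esupField P Z (pickandsCube d s) ≠ ⊤ :=
    fun s hs => (hnorm s hs).2.ne
  rcases eq_or_lt_of_le hδ0 with hδ | hδ
  · -- δ = 0
    subst hδ
    have hgrid : pickandsGrid d 0 = Set.univ := by unfold pickandsGrid; simp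
    simp only [hgrid, Set.inter_univ]
    set f : ℝ → ℝ≥0∞ := fun s => esupField P Z (pickandsCube d s) with hfdef
    set H : ℝ≥0∞ := ⨅ (s : ℝ) (_ : 0 < s), f s / ENNReal.ofReal (s^d) with hHdef
    have hHle : H ≤ f 1 / ENNReal.ofReal ((1:ℝ)^d) := iInf₂_le 1 one_pos
    refine ⟨H, ?_, ?_⟩
    · refine ne_top_of_le_ne_top ?_ hHle
      simp only [one_pow, ENNReal.ofReal_one, div_one]
      exact hfin 1 one_pos
    · refine tendsto_of_le_liminf_of_limsup_le ?_ ?_ (by isBoundedDefault) (by isBoundedDefault)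
      · refine le_liminf_of_le (by isBoundedDefault) ?_
        filter_upwards [eventually_gt_atTop (0:ℝ)] with T hT
        exact iInf₂_le T hT
      · refine le_iInf₂ fun s' hs' => ?_
        have key : ∀ s ∈ Set.Ioo (0:ℝ) s',
            limsup (fun T => f T / ENNReal.ofReal (T^d)) atTop
              ≤ f s' / ENNReal.ofReal (s^d) := by
          intro s hsI
          refine limsup_div_le f d s hsI.1 (f s') fun T hT => ?_
          have hε : 0 < (s' - s)/2 := by linarith [hsI.2]
          have h := subadd_zero P Z hjm hshi D₀ hD₀c hae hsI.1 hε hT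
          rwa [show s + 2*((s'-s)/2) = s' by ring] at h
        have ht : Tendsto (fun s : ℝ => f s' / ENNReal.ofReal (s^d)) (𝓝[<] s')
            (𝓝 (f s' / ENNReal.ofReal (s'^d))) := by
          simp only [div_eq_mul_inv]
          refine ENNReal.Tendsto.const_mul ?_ (Or.inr (hfin s' hs'))
          exact Filter.Tendsto.inv
            (((ENNReal.continuous_ofReal.tendsto _).comp
              ((continuous_pow d).tendsto s')).mono_left nhdsWithin_le_nhds)
        refine ge_of_tendsto ht ?_
        filter_upwards [Ioo_mem_nhdsLT_of_mem (⟨hs', le_refl s'⟩ : s' ∈ Set.Ioc 0 s')]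
          with s hsI using key s hsI
  · -- δ > 0
    set f : ℝ → ℝ≥0∞ :=
      fun T => esupField P Z (pickandsCube d T ∩ pickandsGrid d δ) with hfdef
    have hfup : ∀ T : ℝ, 0 < T → f T ≠ ⊤ := fun T hT =>
      ne_top_of_le_ne_top (hfin T hT) (esup_mono P Z Set.inter_subset_left)
    set H : ℝ≥0∞ := ⨅ (m : ℕ) (_ : 0 < m), f (δ * m) / ENNReal.ofReal ((δ * m)^d) with hHdef
    have hδm : ∀ m : ℕ, 0 < m → (0:ℝ) < δ * m := by
      intro m hm
      have : (0:ℝ) < (m:ℝ) := by exact_mod_cast hm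
      positivity
    refine ⟨H, ?_, ?_⟩
    · refine ne_top_of_le_ne_top ?_ (iInf₂_le 1 one_pos)
      exact (ENNReal.div_lt_top (hfup _ (hδm 1 one_pos))
        (ENNReal.ofReal_pos.2 (pow_pos (hδm 1 one_pos) d)).ne').ne
    · refine tendsto_of_le_liminf_of_limsup_le ?_ ?_ (by isBoundedDefault) (by isBoundedDefault)
      · -- liminf part
        refine le_liminf_aux H _ d ?_
        intro ε hε0 hε1
        filter_upwards [eventually_ge_atTop (max δ (δ/ε)), eventually_gt_atTop (0:ℝ)]
          with T hTm hT0
        set n := ⌊T/δ⌋₊ with hndef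
        have hn1 : 1 ≤ n := Nat.le_floor (by
          rw [le_div_iff₀ hδ]
          simpa using le_trans (le_max_left δ (δ/ε)) hTm)
        have hnT : T - δ ≤ δ * n := by
          have h1 : T/δ < (n:ℝ) + 1 := Nat.lt_floor_add_one (T/δ)
          rw [div_lt_iff₀ hδ] at h1
          nlinarith [h1]
        have hδT : δ ≤ ε * T := by
          have := le_trans (le_max_right δ (δ/ε)) hTm
          rw [div_le_iff₀ hε0] at this
          linarith [this]
        have hnpos : (0:ℝ) < δ * n := hδm n hn1
        have htrunc : f T = f (δ * n) := by
          simp only [hfdef]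
          rw [cube_grid_trunc hδ hT0.le]
        have hHn : H * ENNReal.ofReal ((δ * n)^d) ≤ f (δ * n) := by
          have h1 : H ≤ f (δ * n) / ENNReal.ofReal ((δ * n)^d) := iInf₂_le n hn1
          rwa [ENNReal.le_div_iff_mul_le
            (Or.inl (ENNReal.ofReal_pos.2 (by positivity)).ne')
            (Or.inl ENNReal.ofReal_ne_top)] at h1
        have hratio : (1 - ε)^d ≤ (δ * n / T)^d := by
          refine pow_le_pow_left₀ (by linarith) ?_ d
          rw [le_div_iff₀ hT0]
          nlinarith [hnT, hδT]
        calc H * ENNReal.ofReal ((1-ε)^d)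
            ≤ H * ENNReal.ofReal ((δ * n / T)^d) :=
              by gcongr
          _ = H * (ENNReal.ofReal ((δ * n)^d) / ENNReal.ofReal (T^d)) := by
              rw [div_pow, ENNReal.ofReal_div_of_pos (by positivity)]
          _ = (H * ENNReal.ofReal ((δ * n)^d)) / ENNReal.ofReal (T^d) := by
              rw [mul_div_assoc]
          _ ≤ f (δ * n) / ENNReal.ofReal (T^d) := ENNReal.div_le_div_right hHn _
          _ = f T / ENNReal.ofReal (T^d) := by rw [htrunc]
      · -- limsup part
        refine le_iInf₂ fun m hm => ?_
        exact limsup_div_le f d (δ * m) (hδm m hm) (f (δ * m))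
          fun T hT => subadd_pos P Z hjm hshi hδ hm hT
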